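/- For real numbers a > b ≥ c > d > 0 with ad - bc < 0, the function g(x) = ln((a^x - b^x)/(c^x - d^x)), extended continuously at 0, is strictly concave on the real line. -/

import Mathlib

open Real Set Filter


lemma aux_sinh_lt {t : ℝ} (ht : 0 < t) : Real.sinh t < t * Real.cosh t := by
  have hm : StrictMonoOn (fun s : ℝ => s * Real.cosh s - Real.sinh s) (Ici 0) := by
    apply strictMonoOn_of_deriv_pos (convex_Ici 0)
    · exact ((continuous_id.mul Real.continuous_cosh).sub Real.continuous_sinh).continuousOn
    · intro s hs
      rw [interior_Ici] at hs
      have hd : HasDerivAt (fun s : ℝ => s * Real.cosh s - Real.sinh s)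
          (1 * Real.cosh s + s * Real.sinh s - Real.cosh s) s :=
        ((hasDerivAt_id s).mul (Real.hasDerivAt_cosh s)).sub (Real.hasDerivAt_sinh s)
      rw [hd.deriv]
      have hs' : (0:ℝ) < s := hs
      have h1 : 0 < Real.sinh s := Real.sinh_pos_iff.mpr hs
      nlinarith [mul_pos hs' h1]
  have := hm (self_mem_Ici) (le_of_lt ht : (0:ℝ) ≤ t) ht
  simp only [Real.sinh_zero, Real.cosh_zero, mul_one, zero_mul, sub_zero, zero_sub] at this
  linarith

lemma aux_sinh_slope {u v : ℝ} (hu : 0 < u) (huv : u < v) :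
    v * Real.sinh u < u * Real.sinh v := by
  have hm : StrictMonoOn (fun t : ℝ => Real.sinh t / t) (Ioi 0) := by
    apply strictMonoOn_of_deriv_pos (convex_Ioi 0)
    · exact Real.continuous_sinh.continuousOn.div continuousOn_id
        (fun t ht => ne_of_gt ht)
    · intro t ht
      rw [interior_Ioi] at ht
      replace ht : (0:ℝ) < t := ht
      have hd : HasDerivAt (fun t : ℝ => Real.sinh t / t)
          ((Real.cosh t * t - Real.sinh t * 1) / t ^ 2) t :=
        (Real.hasDerivAt_sinh t).div (hasDerivAt_id t) (ne_of_gt ht)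
      rw [hd.deriv]
      have := aux_sinh_lt ht
      have h2 : (0:ℝ) < t ^ 2 := by positivity
      rw [div_pos_iff]
      left
      constructor <;> nlinarith
  have h := hm (mem_Ioi.mpr hu) (mem_Ioi.mpr (hu.trans huv)) huv
  simp only at h
  rw [div_lt_div_iff₀ hu (hu.trans huv)] at h
  linarith

lemma aux_coth_mono {u v : ℝ} (hu : 0 < u) (huv : u < v) :
    u * Real.cosh u * Real.sinh v < v * Real.cosh v * Real.sinh u := by
  have h := aux_sinh_slope (u := v - u) (v := v + u) (by linarith) (by linarith)
  rw [show v - u = v + -u by ring, Real.sinh_add, Real.sinh_add, Real.sinh_neg,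
    Real.cosh_neg] at h
  nlinarith

lemma even_reduction {E : ℝ → ℝ} (heven : ∀ x, E (-x) = E x)
    (hconc : StrictConcaveOn ℝ (Ici 0) E) (hanti : AntitoneOn E (Ici 0)) :
    StrictConcaveOn ℝ univ E := by
  have habs : ∀ x : ℝ, E |x| = E x := by
    intro x
    rcases le_or_gt 0 x with hx | hx
    · rw [abs_of_nonneg hx]
    · rw [abs_of_neg hx, heven]
  have hSA : StrictAntiOn E (Ici 0) := by
    intro x hx y hy hxy
    rcases lt_or_eq_of_le (hanti hx hy hxy.le) with h | h
    · exact h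
    · exfalso
      have hm : (x + y) / 2 ∈ Ici (0:ℝ) := by
        simp only [mem_Ici] at hx hy ⊢; linarith
      have h1 := hconc.2 hx hy (ne_of_lt hxy) (by norm_num : (0:ℝ) < 1/2)
        (by norm_num : (0:ℝ) < 1/2) (by norm_num)
      have h2 := hanti hx hm (by simp only [mem_Ici] at hx hy ⊢; linarith)
      simp only [smul_eq_mul] at h1
      have : (1:ℝ)/2 * x + 1/2 * y = (x + y) / 2 := by ring
      rw [this] at h1
      linarith
  have key : ∀ x y : ℝ, x < y → ∀ s t : ℝ, 0 < s → 0 < t → s + t = 1 →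
      s * E x + t * E y < E (s * x + t * y) := by
    intro x y hxy s t hs ht hst
    rcases le_or_gt 0 x with hx | hx
    · -- both nonneg
      have := hconc.2 (mem_Ici.mpr hx) (mem_Ici.mpr (by linarith : (0:ℝ) ≤ y))
        (ne_of_lt hxy) hs ht hst
      simpa using this
    · rcases le_or_gt y 0 with hy | hy
      · -- both nonpos: reflect
        have := hconc.2 (mem_Ici.mpr (by linarith : (0:ℝ) ≤ -y))
          (mem_Ici.mpr (by linarith : (0:ℝ) ≤ -x))
          (by intro hh; apply ne_of_lt hxy; linarith) ht hs (by linarith)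
        simp only [smul_eq_mul] at this
        rw [heven, heven] at this
        have hrw : t * -y + s * -x = -(s * x + t * y) := by ring
        rw [hrw, heven] at this
        linarith
      · -- mixed : x < 0 < y
        set z := s * x + t * y with hz
        set w := s * (-x) + t * y with hw
        have hwmem : w ∈ Ici (0:ℝ) := by
          have : 0 < w := by have := mul_pos hs (by linarith : (0:ℝ) < -x);
                             have := mul_pos ht hy; simp only [hw]; linarith
          exact mem_Ici.mpr this.le
        have hzw : |z| ≤ w := by
          rw [abs_le]
          constructor <;> [skip; skip] <;>
            · simp only [hz, hw]
              nlinarith [mul_pos hs (by linarith : (0:ℝ) < -x), mul_pos ht hy,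
                mul_nonneg hs.le (le_of_lt hy)]
        have hEz : E z = E |z| := (habs z).symm
        rcases eq_or_ne (-x) y with hxy2 | hxy2
        · -- -x = y : w = y, strict decrease
          have hwy : w = y := by simp only [hw, ← hxy2]; ring_nf; nlinarith [hst]
          have hzlt : |z| < w := by
            have : z = (t - s) * y := by simp only [hz, ← hxy2]; ring
            rw [this, abs_mul, abs_of_pos hy, hwy]
            have : |t - s| < 1 := by rw [abs_lt]; constructor <;> linarith
            nlinarith
          have := hSA (mem_Ici.mpr (abs_nonneg z)) hwmem hzlt
          have hcombo : s * E x + t * E y = E w := by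
            have hEx : E x = E y := by rw [← heven x, hxy2]
            rw [hEx, hwy]
            linear_combination E y * hst
          rw [hcombo, hEz]
          linarith
        · have h1 := hconc.2 (mem_Ici.mpr (by linarith : (0:ℝ) ≤ -x))
            (mem_Ici.mpr hy.le) hxy2 hs ht hst
          simp only [smul_eq_mul] at h1
          rw [heven] at h1
          have h2 : E w ≤ E |z| := hanti (mem_Ici.mpr (abs_nonneg z)) hwmem hzw
          rw [hEz]
          calc s * E x + t * E y < E (s * -x + t * y) := h1
            _ = E w := by rw [hw]
            _ ≤ E |z| := h2
  refine ⟨convex_univ, fun x _ y _ hxy s t hs ht hst => ?_⟩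
  simp only [smul_eq_mul]
  rcases lt_or_gt_of_ne hxy with h | h
  · exact key x y h s t hs ht hst
  · have := key y x h t s ht hs (by linarith)
    have h1 : t * y + s * x = s * x + t * y := by ring
    rw [h1] at this
    linarith
noncomputable def logMean (x y : ℝ) : ℝ := (x - y) / (Real.log x - Real.log y)

set_option maxHeartbeats 2000000 in
theorem stmt2 (a b c d : ℝ) (hab : a > b) (hbc : b ≥ c) (hcd : c > d) (hd : d > 0)
    (h : a * d - b * c < 0) :
    StrictConcaveOn ℝ Set.univ (fun x : ℝ =>
      if x = 0 then Real.log (((a - b) / (c - d)) * (logMean c d / logMean a b))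
      else Real.log ((a ^ x - b ^ x) / (c ^ x - d ^ x))) := by
  have hc0 : 0 < c := hd.trans hcd
  have hb0 : 0 < b := lt_of_lt_of_le hc0 hbc
  have ha0 : 0 < a := hb0.trans hab
  set la := Real.log a with hla
  set lb := Real.log b with hlb
  set lc := Real.log c with hlc
  set ld := Real.log d with hld
  have hlab : lb < la := Real.log_lt_log hb0 hab
  have hlcd : ld < lc := Real.log_lt_log hd hcd
  have hpq0 : la - lb < lc - ld := by
    have h1 : Real.log (a * d) < Real.log (b * c) :=
      Real.log_lt_log (by positivity) (by linarith)
    rw [Real.log_mul (ne_of_gt ha0) (ne_of_gt hd),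
      Real.log_mul (ne_of_gt hb0) (ne_of_gt hc0)] at h1
    linarith
  set p := (la - lb) / 2 with hpdef
  set q := (lc - ld) / 2 with hqdef
  have hp : 0 < p := by simp only [hpdef]; linarith
  have hq : 0 < q := by simp only [hqdef]; linarith
  have hpq : p < q := by simp only [hpdef, hqdef]; linarith
  set M1 := (la + lb) / 2 with hM1
  set M2 := (lc + ld) / 2 with hM2
  set lam := M1 - M2 with hlam
  -- basic identity
  have hid : ∀ u v : ℝ, Real.exp u - Real.exp v =
      Real.exp ((u + v) / 2) * (2 * Real.sinh ((u - v) / 2)) := by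
    intro u v
    have h1 : Real.exp u = Real.exp ((u + v) / 2) * Real.exp ((u - v) / 2) := by
      rw [← Real.exp_add]; congr 1; ring
    have h2 : Real.exp v = Real.exp ((u + v) / 2) * Real.exp (-((u - v) / 2)) := by
      rw [← Real.exp_add]; congr 1; ring
    rw [Real.sinh_eq, h1, h2]; ring
  have hdiff1 : ∀ x : ℝ, a ^ x - b ^ x =
      Real.exp (M1 * x) * (2 * Real.sinh (p * x)) := by
    intro x
    rw [Real.rpow_def_of_pos ha0, Real.rpow_def_of_pos hb0, ← hla, ← hlb,
      hid (la * x) (lb * x)]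
    have e1 : (la * x + lb * x) / 2 = M1 * x := by rw [hM1]; ring
    have e2 : (la * x - lb * x) / 2 = p * x := by rw [hpdef]; ring
    rw [e1, e2]
  have hdiff2 : ∀ x : ℝ, c ^ x - d ^ x =
      Real.exp (M2 * x) * (2 * Real.sinh (q * x)) := by
    intro x
    rw [Real.rpow_def_of_pos hc0, Real.rpow_def_of_pos hd, ← hlc, ← hld,
      hid (lc * x) (ld * x)]
    have e1 : (lc * x + ld * x) / 2 = M2 * x := by rw [hM2]; ring
    have e2 : (lc * x - ld * x) / 2 = q * x := by rw [hqdef]; ring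
    rw [e1, e2]
  set V := Real.log (((a - b) / (c - d)) * (logMean c d / logMean a b)) with hV
  set E : ℝ → ℝ := fun x =>
    (if x = 0 then V else Real.log ((a ^ x - b ^ x) / (c ^ x - d ^ x))) - lam * x
    with hEdef
  -- formula for E away from 0
  have hEne : ∀ x : ℝ, x ≠ 0 →
      E x = Real.log (Real.sinh (p * x) / Real.sinh (q * x)) := by
    intro x hx
    have hS1 : Real.sinh (p * x) ≠ 0 :=
      Real.sinh_ne_zero.mpr (mul_ne_zero (ne_of_gt hp) hx)
    have hS2 : Real.sinh (q * x) ≠ 0 :=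
      Real.sinh_ne_zero.mpr (mul_ne_zero (ne_of_gt hq) hx)
    have hre : Real.exp ((M1 - M2) * x) * Real.exp (M2 * x) = Real.exp (M1 * x) := by
      rw [← Real.exp_add]; congr 1; ring
    have hrat : (a ^ x - b ^ x) / (c ^ x - d ^ x) =
        Real.exp ((M1 - M2) * x) * (Real.sinh (p * x) / Real.sinh (q * x)) := by
      rw [hdiff1 x, hdiff2 x, ← hre]
      field_simp
    simp only [hEdef, if_neg hx]
    rw [hrat, Real.log_mul (Real.exp_ne_zero _) (div_ne_zero hS1 hS2), Real.log_exp,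
      hlam]
    ring
  -- value at 0
  have hE0 : E 0 = Real.log (p / q) := by
    have harg : (a - b) / (c - d) * (logMean c d / logMean a b) = p / q := by
      simp only [logMean, ← hla, ← hlb, ← hlc, ← hld, hpdef, hqdef]
      have h1 : a - b ≠ 0 := by linarith
      have h2 : c - d ≠ 0 := by linarith
      have h3 : la - lb ≠ 0 := by intro hh; rw [sub_eq_zero] at hh; linarith
      have h4 : lc - ld ≠ 0 := by intro hh; rw [sub_eq_zero] at hh; linarith
      field_simp
    show (if (0:ℝ) = 0 then V else Real.log ((a ^ (0:ℝ) - b ^ (0:ℝ)) / (c ^ (0:ℝ) - d ^ (0:ℝ)))) - lam * 0 = Real.log (p / q)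
    rw [if_pos rfl, hV, harg, mul_zero, sub_zero]
  -- evenness
  have hEeven : ∀ x : ℝ, E (-x) = E x := by
    intro x
    rcases eq_or_ne x 0 with rfl | hx
    · rw [neg_zero]
    · rw [hEne (-x) (neg_ne_zero.mpr hx), hEne x hx,
        show p * -x = -(p * x) by ring, show q * -x = -(q * x) by ring,
        Real.sinh_neg, Real.sinh_neg, neg_div_neg_eq]
  -- smooth representation on Ioi 0
  set φ : ℝ → ℝ := fun y => Real.log (Real.sinh (p * y)) - Real.log (Real.sinh (q * y))
    with hφdef
  have hEφ : ∀ y : ℝ, 0 < y → E y = φ y := by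
    intro y hy
    have hS1 : Real.sinh (p * y) ≠ 0 := ne_of_gt (Real.sinh_pos_iff.mpr (by positivity))
    have hS2 : Real.sinh (q * y) ≠ 0 := ne_of_gt (Real.sinh_pos_iff.mpr (by positivity))
    rw [hEne y (ne_of_gt hy), Real.log_div hS1 hS2]
  set ψ : ℝ → ℝ := fun y =>
    Real.cosh (p * y) * p / Real.sinh (p * y) - Real.cosh (q * y) * q / Real.sinh (q * y)
    with hψdef
  have hsinhD : ∀ (r y : ℝ), HasDerivAt (fun z => Real.sinh (r * z)) (Real.cosh (r * y) * r) y := by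
    intro r y
    have := (Real.hasDerivAt_sinh (r * y)).comp y ((hasDerivAt_id y).const_mul r)
    simpa [Function.comp_def] using this
  have hcoshD : ∀ (r y : ℝ), HasDerivAt (fun z => Real.cosh (r * z)) (Real.sinh (r * y) * r) y := by
    intro r y
    have := (Real.hasDerivAt_cosh (r * y)).comp y ((hasDerivAt_id y).const_mul r)
    simpa [Function.comp_def] using this
  have hφ' : ∀ y : ℝ, 0 < y → HasDerivAt φ (ψ y) y := by
    intro y hy
    have hS1 : Real.sinh (p * y) ≠ 0 := ne_of_gt (Real.sinh_pos_iff.mpr (by positivity))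
    have hS2 : Real.sinh (q * y) ≠ 0 := ne_of_gt (Real.sinh_pos_iff.mpr (by positivity))
    exact ((hsinhD p y).log hS1).sub ((hsinhD q y).log hS2)
  have hEderiv : ∀ y : ℝ, 0 < y → deriv E y = ψ y := by
    intro y hy
    have hev : E =ᶠ[nhds y] φ :=
      Filter.eventuallyEq_of_mem (isOpen_Ioi.mem_nhds hy) (fun z hz => hEφ z hz)
    rw [hev.deriv_eq]
    exact (hφ' y hy).deriv
  -- key inequalities
  have hkey : ∀ y : ℝ, 0 < y → q * Real.sinh (p * y) < p * Real.sinh (q * y) := by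
    intro y hy
    have := aux_sinh_slope (u := p * y) (v := q * y) (by positivity)
      (by nlinarith)
    nlinarith
  have hψneg : ∀ y : ℝ, 0 < y → ψ y ≤ 0 := by
    intro y hy
    have hS1 : 0 < Real.sinh (p * y) := Real.sinh_pos_iff.mpr (by positivity)
    have hS2 : 0 < Real.sinh (q * y) := Real.sinh_pos_iff.mpr (by positivity)
    have hco := aux_coth_mono (u := p * y) (v := q * y) (by positivity) (by nlinarith)
    simp only [hψdef]
    rw [sub_nonpos, div_le_div_iff₀ hS1 hS2]
    have h4 : y * (Real.cosh (p * y) * p * Real.sinh (q * y)) <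
        y * (Real.cosh (q * y) * q * Real.sinh (p * y)) := by
      calc y * (Real.cosh (p * y) * p * Real.sinh (q * y))
          = p * y * Real.cosh (p * y) * Real.sinh (q * y) := by ring
        _ < q * y * Real.cosh (q * y) * Real.sinh (p * y) := hco
        _ = y * (Real.cosh (q * y) * q * Real.sinh (p * y)) := by ring
    exact le_of_lt (lt_of_mul_lt_mul_left h4 hy.le)
  -- continuity
  have hratlim : Filter.Tendsto (fun y : ℝ => Real.sinh (p * y) / Real.sinh (q * y))
      (nhdsWithin 0 {(0:ℝ)}ᶜ) (nhds (p / q)) := by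
    have h1 : HasDerivAt (fun z => Real.sinh (p * z)) p 0 := by
      have := hsinhD p 0; simpa using this
    have h2 : HasDerivAt (fun z => Real.sinh (q * z)) q 0 := by
      have := hsinhD q 0; simpa using this
    have t1 := hasDerivAt_iff_tendsto_slope.mp h1
    have t2 := hasDerivAt_iff_tendsto_slope.mp h2
    have t3 := t1.div t2 (ne_of_gt hq)
    refine t3.congr' ?_
    filter_upwards [self_mem_nhdsWithin] with y hy
    have hy' : y ≠ 0 := hy
    have hS2 : Real.sinh (q * y) ≠ 0 :=
      Real.sinh_ne_zero.mpr (mul_ne_zero (ne_of_gt hq) hy')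
    have e1 : slope (fun z => Real.sinh (p * z)) 0 y = Real.sinh (p * y) / y := by
      rw [slope_def_field]
      rw [mul_zero, Real.sinh_zero, sub_zero, sub_zero]
    have e2 : slope (fun z => Real.sinh (q * z)) 0 y = Real.sinh (q * y) / y := by
      rw [slope_def_field]
      rw [mul_zero, Real.sinh_zero, sub_zero, sub_zero]
    show slope (fun z => Real.sinh (p * z)) 0 y / slope (fun z => Real.sinh (q * z)) 0 y =
      Real.sinh (p * y) / Real.sinh (q * y)
    rw [e1, e2]
    field_simp
  have hcontAt : ∀ x : ℝ, ContinuousAt E x := by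
    intro x
    rcases eq_or_ne x 0 with rfl | hx
    · rw [ContinuousAt, hE0, ← nhdsNE_sup_pure 0]
      refine Filter.Tendsto.sup ?_ ?_
      · have hlog := hratlim.log (by positivity : p / q ≠ 0)
        refine hlog.congr' ?_
        filter_upwards [self_mem_nhdsWithin] with y hy
        exact (hEne y hy).symm
      · have : E 0 = Real.log (p / q) := hE0
        rw [← this]
        exact tendsto_pure_nhds E 0
    · have hev : (fun y => Real.log (Real.sinh (p * y) / Real.sinh (q * y))) =ᶠ[nhds x] E := by
        refine Filter.eventuallyEq_of_mem (isOpen_compl_singleton.mem_nhds hx) ?_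
        intro y hy
        exact (hEne y hy).symm
      refine ContinuousAt.congr ?_ hev
      have hS1 : Real.sinh (p * x) ≠ 0 :=
        Real.sinh_ne_zero.mpr (mul_ne_zero (ne_of_gt hp) hx)
      have hS2 : Real.sinh (q * x) ≠ 0 :=
        Real.sinh_ne_zero.mpr (mul_ne_zero (ne_of_gt hq) hx)
      have hcd : ContinuousAt (fun y : ℝ => Real.sinh (p * y) / Real.sinh (q * y)) x :=
        ContinuousAt.div
          (Real.continuous_sinh.comp (continuous_const.mul continuous_id)).continuousAt
          (Real.continuous_sinh.comp (continuous_const.mul continuous_id)).continuousAt hS2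
      exact ContinuousAt.log hcd (div_ne_zero hS1 hS2)
  have hcont : Continuous E := continuous_iff_continuousAt.mpr hcontAt
  -- second derivative negative on Ioi 0
  have hderiv2 : ∀ x ∈ interior (Ici (0:ℝ)), deriv^[2] E x < 0 := by
    intro x hx
    rw [interior_Ici] at hx
    replace hx : (0:ℝ) < x := hx
    have hS1 : 0 < Real.sinh (p * x) := Real.sinh_pos_iff.mpr (by positivity)
    have hS2 : 0 < Real.sinh (q * x) := Real.sinh_pos_iff.mpr (by positivity)
    have hev : deriv E =ᶠ[nhds x] ψ :=
      Filter.eventuallyEq_of_mem (isOpen_Ioi.mem_nhds hx) (fun z hz => hEderiv z hz)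
    have hψ' : HasDerivAt ψ
        ((Real.sinh (p * x) * p * p * Real.sinh (p * x) -
          Real.cosh (p * x) * p * (Real.cosh (p * x) * p)) / Real.sinh (p * x) ^ 2 -
         (Real.sinh (q * x) * q * q * Real.sinh (q * x) -
          Real.cosh (q * x) * q * (Real.cosh (q * x) * q)) / Real.sinh (q * x) ^ 2) x := by
      have d1 := ((hcoshD p x).mul_const p).div (hsinhD p x) (ne_of_gt hS1)
      have d2 := ((hcoshD q x).mul_const q).div (hsinhD q x) (ne_of_gt hS2)
      exact d1.sub d2
    have e1 : Real.sinh (p * x) * p * p * Real.sinh (p * x) -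
        Real.cosh (p * x) * p * (Real.cosh (p * x) * p) = -(p ^ 2) := by
      linear_combination (-(p ^ 2)) * (Real.cosh_sq_sub_sinh_sq (p * x))
    have e2 : Real.sinh (q * x) * q * q * Real.sinh (q * x) -
        Real.cosh (q * x) * q * (Real.cosh (q * x) * q) = -(q ^ 2) := by
      linear_combination (-(q ^ 2)) * (Real.cosh_sq_sub_sinh_sq (q * x))
    have hkx := hkey x hx
    have hfin : (-(p ^ 2)) / Real.sinh (p * x) ^ 2 - (-(q ^ 2)) / Real.sinh (q * x) ^ 2 < 0 := by
      have heq : (-(p ^ 2)) / Real.sinh (p * x) ^ 2 - (-(q ^ 2)) / Real.sinh (q * x) ^ 2 =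
          (q ^ 2 * Real.sinh (p * x) ^ 2 - p ^ 2 * Real.sinh (q * x) ^ 2) /
            (Real.sinh (p * x) ^ 2 * Real.sinh (q * x) ^ 2) := by
        field_simp
        ring
      rw [heq]
      apply div_neg_of_neg_of_pos
      · have hprod := mul_pos (sub_pos.mpr hkx)
          (add_pos (mul_pos hp (Real.sinh_pos_iff.mpr (by positivity : 0 < q * x)))
            (mul_pos hq (Real.sinh_pos_iff.mpr (by positivity : 0 < p * x))))
        nlinarith [hprod]
      · positivity
    rw [Function.iterate_succ_apply', Function.iterate_one, hev.deriv_eq, hψ'.deriv, e1, e2]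
    exact hfin
  -- strict concavity on Ici 0
  have hconcIci : StrictConcaveOn ℝ (Ici 0) E :=
    strictConcaveOn_of_deriv2_neg (convex_Ici 0) hcont.continuousOn hderiv2
  -- antitone on Ici 0
  have hanti : AntitoneOn E (Ici 0) := by
    apply antitoneOn_of_deriv_nonpos (convex_Ici 0) hcont.continuousOn
    · intro y hy
      rw [interior_Ici] at hy
      have hev : φ =ᶠ[nhds y] E :=
        Filter.eventuallyEq_of_mem (isOpen_Ioi.mem_nhds hy) (fun z hz => (hEφ z hz).symm)
      exact ((hφ' y hy).differentiableAt.congr_of_eventuallyEq hev.symm).differentiableWithinAt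
    · intro y hy
      rw [interior_Ici] at hy
      rw [hEderiv y hy]
      exact hψneg y hy
  -- conclude via even reduction
  have hEuniv : StrictConcaveOn ℝ univ E := even_reduction hEeven hconcIci hanti
  have hlin : ConcaveOn ℝ univ (fun x : ℝ => lam * x) := by
    refine ⟨convex_univ, fun x _ y _ s t hs ht hst => ?_⟩
    simp only [smul_eq_mul]
    exact le_of_eq (by ring)
  have hsum := hEuniv.add_concaveOn hlin
  have hfun : (fun x : ℝ =>
      if x = 0 then Real.log (((a - b) / (c - d)) * (logMean c d / logMean a b))
      else Real.log ((a ^ x - b ^ x) / (c ^ x - d ^ x))) = fun x => E x + lam * x := by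
    funext x
    simp only [hEdef, hV]
    ring
  rw [hfun]
  exact hsum
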